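/- Fix a vote histogram H ∈ ℝ^c with c ≥ 1. Then as the noise scale σ tends to infinity, the output distribution of the noisy argmax mechanism tends to the uniform distribution on the c classes: for every class k, [Q_σ(H)]_k → 1/c as σ → ∞. -/

import Mathlib

open MeasureTheory ProbabilityTheory Filter

/-- `[Q_σ(H)]_k`: the probability that PATE's noisy argmax mechanism, which adds
i.i.d. `N(0, σ²)` noise to each coordinate of the vote histogram `H`, outputs class `k`. -/
noncomputable def noisyArgmaxProb (c : ℕ) (σ : ℝ) (H : Fin c → ℝ) (k : Fin c) : ℝ :=
  ((Measure.pi fun _ : Fin c => gaussianReal 0 ⟨σ ^ 2, sq_nonneg σ⟩)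
      {S | ∀ i, i ≠ k → H i + S i < H k + S k}).toReal

open Set
open scoped ENNReal

namespace NoisyArgmaxAux


noncomputable def gam : Measure ℝ := gaussianReal 0 1

instance : IsProbabilityMeasure gam := by unfold gam; infer_instance

instance : NullSingletonClass gam :=
  ⟨fun a => gaussianReal_absolutelyContinuous 0 one_ne_zero (measure_singleton a)⟩

noncomputable def P (c : ℕ) : Measure (Fin c → ℝ) := Measure.pi fun _ => gam

instance (c : ℕ) : IsProbabilityMeasure (P c) := by unfold P; infer_instance

lemma measSet {c : ℕ} (a b : Fin c → ℝ) (k : Fin c) :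
    MeasurableSet {x : Fin c → ℝ | ∀ i, i ≠ k → a i + b i * x i < a k + b k * x k} := by
  have : {x : Fin c → ℝ | ∀ i, i ≠ k → a i + b i * x i < a k + b k * x k}
      = ⋂ i, ⋂ _ : i ≠ k, {x | a i + b i * x i < a k + b k * x k} := by
    ext x; simp [Set.mem_iInter]
  rw [this]
  exact MeasurableSet.iInter fun i => MeasurableSet.iInter fun _ =>
    measurableSet_lt (measurable_const.add ((measurable_pi_apply i).const_mul _))
      (measurable_const.add ((measurable_pi_apply k).const_mul _))

lemma tie_null {c : ℕ} {i j : Fin c} (hij : i ≠ j) : P c {x | x i = x j} = 0 := by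
  obtain ⟨n, rfl⟩ : ∃ n, c = n + 1 := ⟨c - 1, (Nat.succ_pred_eq_of_pos j.pos).symm⟩
  obtain ⟨l, hl⟩ := Fin.exists_succAbove_eq hij
  have hφ := measurePreserving_piFinSuccAbove (fun _ : Fin (n + 1) => gam) j
  have ht : MeasurableSet {p : ℝ × (Fin n → ℝ) | p.2 l = p.1} :=
    measurableSet_eq_fun (measurable_snd.eval) measurable_fst
  have hset : {x : Fin (n + 1) → ℝ | x i = x j}
      = (MeasurableEquiv.piFinSuccAbove (fun _ => ℝ) j) ⁻¹' {p : ℝ × (Fin n → ℝ) | p.2 l = p.1} := by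
    ext x
    simp [MeasurableEquiv.piFinSuccAbove_apply, Fin.removeNth, hl]
  rw [show P (n + 1) = Measure.pi (fun _ : Fin (n+1) => gam) from rfl, hset,
    hφ.measure_preimage ht.nullMeasurableSet, Measure.prod_apply ht]
  have h0 : ∀ a : ℝ, (Measure.pi fun _ : Fin n => gam) {y : Fin n → ℝ | y l = a} = 0 :=
    fun a => Measure.pi_hyperplane (fun _ : Fin n => gam) l a
  simp [h0]

def A {c : ℕ} (j : Fin c) : Set (Fin c → ℝ) := {x | ∀ i, i ≠ j → x i < x j}

lemma measA {c : ℕ} (j : Fin c) : MeasurableSet (A j) := by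
  have : A j = {x : Fin c → ℝ | ∀ i, i ≠ j → (0 : Fin c → ℝ) i + (1 : Fin c → ℝ) i * x i
      < (0 : Fin c → ℝ) j + (1 : Fin c → ℝ) j * x j} := by
    ext x; simp [A]
  rw [this]; exact measSet _ _ j

lemma measure_A_eq {c : ℕ} (j k : Fin c) : P c (A j) = P c (A k) := by
  set e : Fin c ≃ Fin c := Equiv.swap j k with he
  have hφ := measurePreserving_piCongrLeft (fun _ : Fin c => gam) e
  have key : ∀ (x : (Fin c) → ℝ) (b : Fin c),
      (MeasurableEquiv.piCongrLeft (fun _ : Fin c => ℝ) e) x (e b) = x b := by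
    intro x b
    rw [MeasurableEquiv.coe_piCongrLeft]
    exact Equiv.piCongrLeft_apply_apply (fun _ : Fin c => ℝ) e x b
  have hek : e k = j := Equiv.swap_apply_right j k
  have hpre : (MeasurableEquiv.piCongrLeft (fun _ : Fin c => ℝ) e) ⁻¹' (A j) = A k := by
    ext x
    constructor
    · intro h i hik
      have h2 := h (e i) (by rw [← hek]; exact fun hh => hik (e.injective hh))
      rwa [key, ← hek, key] at h2
    · intro h i' hij
      have hb : e (e.symm i') = i' := e.apply_symm_apply i'
      have hbk : e.symm i' ≠ k := by
        intro hbk; apply hij; rw [← hb, hbk, hek]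
      have := h (e.symm i') hbk
      rw [← hb, key, ← hek, key]
      exact this
  calc P c (A j) = P c ((MeasurableEquiv.piCongrLeft (fun _ : Fin c => ℝ) e) ⁻¹' (A j)) :=
        (hφ.measure_preimage (measA j).nullMeasurableSet).symm
    _ = P c (A k) := by rw [hpre]

lemma measure_A (c : ℕ) (hc : 1 ≤ c) (k : Fin c) : P c (A k) = (c : ℝ≥0∞)⁻¹ := by
  have hd : Pairwise (Function.onFun Disjoint (A (c := c))) := by
    intro a b hab
    rw [Function.onFun, Set.disjoint_left]
    intro x hxa hxb
    exact lt_asymm (hxa b (Ne.symm hab)) (hxb a hab)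
  have hU : P c (⋃ j, A j) = ∑ j, P c (A j) := by
    rw [measure_iUnion hd fun j => measA j, tsum_fintype]
  have hN : P c (⋃ j, A (c := c) j)ᶜ = 0 := by
    have hsub : (⋃ j, A (c := c) j)ᶜ ⊆
        ⋃ i, ⋃ j, ⋃ _ : i ≠ j, {x : Fin c → ℝ | x i = x j} := by
      intro x hx
      have : Nonempty (Fin c) := ⟨⟨0, hc⟩⟩
      obtain ⟨j₀, hj₀⟩ := Finite.exists_max x
      simp only [Set.mem_compl_iff, Set.mem_iUnion, not_exists] at hx ⊢
      have hx0 : x ∉ A j₀ := by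
        intro hmem; exact hx j₀ hmem
      rw [A, Set.mem_setOf] at hx0; push_neg at hx0
      obtain ⟨i, hi, hle⟩ := hx0
      exact ⟨i, j₀, hi, le_antisymm (hj₀ i) hle⟩
    refine measure_mono_null hsub ?_
    exact measure_iUnion_null fun i => measure_iUnion_null fun j =>
      measure_iUnion_null fun hij => tie_null hij
  have h1 : P c (⋃ j, A (c := c) j) = 1 :=
    (prob_compl_eq_zero_iff (MeasurableSet.iUnion fun j => measA j)).mp hN
  have hsum : (c : ℝ≥0∞) * P c (A k) = 1 := by
    rw [← h1, hU, Finset.sum_congr rfl fun j _ => measure_A_eq j k, Finset.sum_const,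
      Finset.card_univ, Fintype.card_fin, nsmul_eq_mul]
  have hc0 : (c : ℝ≥0∞) ≠ 0 := by
    simp only [ne_eq, Nat.cast_eq_zero]; omega
  calc P c (A k) = (c : ℝ≥0∞)⁻¹ * ((c : ℝ≥0∞) * P c (A k)) := by
        rw [← mul_assoc, ENNReal.inv_mul_cancel hc0 (ENNReal.natCast_ne_top c), one_mul]
    _ = (c : ℝ≥0∞)⁻¹ := by rw [hsum, mul_one]


lemma measB {c : ℕ} (H : Fin c → ℝ) (σ : ℝ) (k : Fin c) :
    MeasurableSet {x : Fin c → ℝ | ∀ i, i ≠ k → H i + σ * x i < H k + σ * x k} :=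
  measSet H (fun _ => σ) k

lemma prob_eq {c : ℕ} (H : Fin c → ℝ) (k : Fin c) {σ : ℝ} (_hσ : σ ≠ 0) :
    noisyArgmaxProb c σ H k
      = (P c {x : Fin c → ℝ | ∀ i, i ≠ k → H i + σ * x i < H k + σ * x k}).toReal := by
  have hmap : MeasurePreserving (fun t : ℝ => σ * t) gam (gaussianReal 0 ⟨σ ^ 2, sq_nonneg σ⟩) := by
    refine ⟨measurable_id.const_mul σ, ?_⟩
    have h := gaussianReal_map_const_mul (μ := 0) (v := 1) σ
    simp at h
    exact h
  haveI := instIsProbabilityMeasureGaussianReal 0 ⟨σ ^ 2, sq_nonneg σ⟩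
  have hg := measurePreserving_pi (fun _ : Fin c => gam)
    (fun _ : Fin c => gaussianReal 0 ⟨σ ^ 2, sq_nonneg σ⟩) (fun _ => hmap)
  have hAmeas : MeasurableSet {S : Fin c → ℝ | ∀ i, i ≠ k → H i + S i < H k + S k} := by
    have := measSet H (fun _ => (1:ℝ)) k
    simpa using this
  have := hg.measure_preimage hAmeas.nullMeasurableSet
  rw [noisyArgmaxProb, ← this]
  rfl

lemma key_tendsto {c : ℕ} (H : Fin c → ℝ) (k : Fin c) :
    Tendsto (fun σ : ℝ =>
        (P c {x : Fin c → ℝ | ∀ i, i ≠ k → H i + σ * x i < H k + σ * x k}).toReal)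
      atTop (nhds ((P c (A k)).toReal)) := by
  have hint : ∀ σ : ℝ,
      (P c {x : Fin c → ℝ | ∀ i, i ≠ k → H i + σ * x i < H k + σ * x k}).toReal
        = ∫ x, ({x : Fin c → ℝ | ∀ i, i ≠ k → H i + σ * x i < H k + σ * x k}).indicator
            (fun _ => (1:ℝ)) x ∂(P c) :=
    fun σ => (integral_indicator_one (measB H σ k)).symm
  have hintA : (P c (A k)).toReal
      = ∫ x, (A k).indicator (fun _ => (1:ℝ)) x ∂(P c) := (integral_indicator_one (measA k)).symm
  simp only [hint, hintA]
  apply tendsto_integral_filter_of_dominated_convergence (bound := fun _ => (1:ℝ))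
  · filter_upwards with σ
    exact (measurable_const.indicator (measB H σ k)).aestronglyMeasurable
  · filter_upwards with σ
    filter_upwards with x
    rw [Set.indicator]
    split <;> simp
  · exact integrable_const 1
  · have hae : ∀ᵐ x ∂ P c, ∀ i, i ≠ k → x i ≠ x k := by
      rw [ae_all_iff]
      intro i
      by_cases hik : i = k
      · exact ae_of_all _ fun x h => absurd hik h
      · have : ∀ᵐ x ∂ P c, ¬ (x i = x k) := by
          rw [ae_iff]; simpa using tie_null hik
        filter_upwards [this] with x hx
        exact fun _ => hx
    filter_upwards [hae] with x hx
    have h1 : ∀ i : Fin c, ∀ᶠ σ : ℝ in atTop,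
        (i ≠ k → (H i + σ * x i < H k + σ * x k ↔ x i < x k)) := by
      intro i
      by_cases hik : i ≠ k
      · have hne := hx i hik
        rcases lt_or_gt_of_ne hne with hlt | hgt
        · have ht : Tendsto (fun σ : ℝ => σ * (x k - x i)) atTop atTop :=
            Tendsto.atTop_mul_const (by linarith) tendsto_id
          filter_upwards [ht.eventually_gt_atTop (H i - H k)] with σ hσ
          intro _
          constructor
          · intro _; exact hlt
          · intro _; nlinarith
        · have ht : Tendsto (fun σ : ℝ => σ * (x i - x k)) atTop atTop :=
            Tendsto.atTop_mul_const (by linarith) tendsto_id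
          filter_upwards [ht.eventually_gt_atTop (H k - H i)] with σ hσ
          intro _
          constructor
          · intro hlt2; exfalso; nlinarith
          · intro hlt2; exact absurd hlt2 (not_lt.mpr hgt.le)
      · filter_upwards with σ
        exact fun h => absurd h hik
    have h2 := (eventually_all).mpr h1
    have hev : ∀ᶠ σ : ℝ in atTop,
        ({y : Fin c → ℝ | ∀ i, i ≠ k → H i + σ * y i < H k + σ * y k}).indicator
            (fun _ => (1:ℝ)) x = (A k).indicator (fun _ => (1:ℝ)) x := by
      filter_upwards [h2] with σ hσ
      have hiff : x ∈ {y : Fin c → ℝ | ∀ i, i ≠ k → H i + σ * y i < H k + σ * y k} ↔ x ∈ A k := by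
        constructor
        · intro h i hik; exact (hσ i hik).1 (h i hik)
        · intro h i hik; exact (hσ i hik).2 (h i hik)
      by_cases hmem : x ∈ A k
      · rw [Set.indicator_of_mem (hiff.mpr hmem), Set.indicator_of_mem hmem]
      · rw [Set.indicator_of_notMem (fun hm => hmem (hiff.mp hm)),
          Set.indicator_of_notMem hmem]
    exact Tendsto.congr' (EventuallyEq.symm hev) tendsto_const_nhds

end NoisyArgmaxAux

open NoisyArgmaxAux in
/-- As the noise scale `σ → ∞`, the output distribution of the noisy
argmax mechanism on a fixed histogram `H ∈ ℝ^c` tends to the uniform distribution: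
for every class `k`, `[Q_σ(H)]_k → 1/c`. -/
theorem noisyArgmaxProb_tendsto_uniform
    (c : ℕ) (hc : 1 ≤ c) (H : Fin c → ℝ) (k : Fin c) :
    Tendsto (fun σ : ℝ => noisyArgmaxProb c σ H k) atTop (nhds (1 / (c : ℝ))) := by
  have hval : ((P c (A k)).toReal : ℝ) = 1 / (c : ℝ) := by
    rw [measure_A c hc k, one_div]
    simp [ENNReal.toReal_inv]
  refine Tendsto.congr' ?_ (hval ▸ key_tendsto H k)
  filter_upwards [eventually_gt_atTop (0:ℝ)] with σ hσ
  exact (prob_eq H k hσ.ne').symm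

-- #print axioms noisyArgmaxProb_tendsto_uniform
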